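/- arXiv:2310.20259 — 3 statements merged into one kernel-verified Lean document; each statement's English description precedes it below -/
import Mathlib

section
/- Let {D_*} be a graded subgroup of a chain complex {C_*, ∂_*} of k-vector spaces, with supremum complex S_* (S_p = D_p + ∂D_{p+1}) and infimum complex I_* (I_p = D_p ∩ ∂^{-1}D_{p-1}). Then the inclusion I_* ↪ S_* is a chain map inducing isomorphisms H_p(I_*) → H_p(S_*) for all p. -/
open Submodule

section

variable {k : Type*} [Field k] (C : ℤ → Type*)
  [∀ p, AddCommGroup (C p)] [∀ p, Module k (C p)]
  (d : ∀ p : ℤ, C (p + 1) →ₗ[k] C p)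

/-- Homology in degree `p+1` of a graded family of subspaces `A`
(`A p ≤ C (p+1)`), namely `(A p ∩ ker ∂) / ∂(A (p+1))`. -/
abbrev Hml (A : ∀ p : ℤ, Submodule k (C (p + 1))) (p : ℤ) :=
  ↥(A p ⊓ LinearMap.ker (d p)) ⧸
    Submodule.comap (A p ⊓ LinearMap.ker (d p)).subtype
      (Submodule.map (d (p + 1)) (A (p + 1)))

end

/-- For a graded subgroup `D` of a chain complex `{C_*, ∂_*}` with supremum
complex `S p = D p + ∂ D (p+1)` and infimum complex `I p = D p ∩ ∂⁻¹ D (p-1)`,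
the inclusion `I ↪ S` induces an isomorphism on homology in every degree: there
is a linear equivalence sending the class of a cycle of `I` to the class of the
same cycle viewed in `S`. -/
theorem inf_to_sup_homology_iso
    {k : Type*} [Field k] (C : ℤ → Type*)
    [∀ p, AddCommGroup (C p)] [∀ p, Module k (C p)]
    (d : ∀ p : ℤ, C (p + 1) →ₗ[k] C p)
    (hd : ∀ (p : ℤ) (x : C (p + 1 + 1)), d p (d (p + 1) x) = 0)
    (D : ∀ p : ℤ, Submodule k (C p)) :
    ∀ p : ℤ,
      ∃ e : Hml C d (fun q => (D (q + 1)) ⊓ Submodule.comap (d q) (D q)) p ≃ₗ[k]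
            Hml C d (fun q => (D (q + 1)) ⊔ Submodule.map (d (q + 1)) (D (q + 1 + 1))) p,
        ∀ (x : C (p + 1))
          (hx : x ∈ ((D (p + 1)) ⊓ Submodule.comap (d p) (D p)) ⊓ LinearMap.ker (d p))
          (hx' : x ∈ ((D (p + 1)) ⊔ Submodule.map (d (p + 1)) (D (p + 1 + 1))) ⊓
              LinearMap.ker (d p)),
          e (Submodule.Quotient.mk ⟨x, hx⟩) = Submodule.Quotient.mk ⟨x, hx'⟩ := by

  intro p
  -- cycles of I and S
  set ZI : Submodule k (C (p + 1)) :=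
    ((D (p + 1)) ⊓ Submodule.comap (d p) (D p)) ⊓ LinearMap.ker (d p) with hZI
  set ZS : Submodule k (C (p + 1)) :=
    ((D (p + 1)) ⊔ Submodule.map (d (p + 1)) (D (p + 1 + 1))) ⊓ LinearMap.ker (d p) with hZS
  set NS : Submodule k ZS :=
    Submodule.comap ZS.subtype
      (Submodule.map (d (p + 1))
        (D (p + 1 + 1) ⊔ Submodule.map (d (p + 1 + 1)) (D (p + 1 + 1 + 1)))) with hNS
  set NI : Submodule k ZI :=
    Submodule.comap ZI.subtype
      (Submodule.map (d (p + 1))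
        (D (p + 1 + 1) ⊓ Submodule.comap (d (p + 1)) (D (p + 1)))) with hNI
  have h1 : ZI ≤ ZS := inf_le_inf_right _ (le_trans inf_le_left le_sup_left)
  let φ : ZI →ₗ[k] ZS ⧸ NS := NS.mkQ ∘ₗ Submodule.inclusion h1
  have hsurj : Function.Surjective φ := by
    intro z
    obtain ⟨z, rfl⟩ := NS.mkQ_surjective z
    have hz1 : z.1 ∈ (D (p + 1)) ⊔ Submodule.map (d (p + 1)) (D (p + 1 + 1)) := z.2.1
    rcases Submodule.mem_sup.mp hz1 with ⟨a, ha, w, hw, hzw⟩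
    rcases Submodule.mem_map.mp hw with ⟨c, hc, rfl⟩
    have hdz : d p z.1 = 0 := z.2.2
    have hda : d p a = 0 := by
      have : d p z.1 = d p a + d p (d (p + 1) c) := by rw [← hzw]; simp
      rw [hdz, hd p c, add_zero] at this
      exact this.symm
    have hmem : a ∈ ZI := ⟨⟨ha, by simp [Submodule.mem_comap, hda]⟩, hda⟩
    refine ⟨⟨a, hmem⟩, ?_⟩
    show NS.mkQ (Submodule.inclusion h1 ⟨a, hmem⟩) = NS.mkQ z
    rw [Submodule.mkQ_apply, Submodule.mkQ_apply, Submodule.Quotient.eq]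
    refine Submodule.mem_comap.mpr ?_
    have hsub : (ZS.subtype (Submodule.inclusion h1 ⟨a, hmem⟩ - z)) = -(d (p + 1) c) := by
      show a - z.1 = -(d (p + 1) c)
      rw [← hzw]; abel
    rw [hsub]
    exact neg_mem (Submodule.mem_map.mpr ⟨c, Submodule.mem_sup_left hc, rfl⟩)
  have hker : LinearMap.ker φ = NI := by
    ext x
    constructor
    · intro hx
      have hx' : Submodule.inclusion h1 x ∈ NS := by
        have := hx
        simpa [φ, LinearMap.mem_ker, Submodule.Quotient.mk_eq_zero] using this
      have hx1 : x.1 ∈ Submodule.map (d (p + 1))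
          (D (p + 1 + 1) ⊔ Submodule.map (d (p + 1 + 1)) (D (p + 1 + 1 + 1))) := hx'
      rcases Submodule.mem_map.mp hx1 with ⟨b, hb, hdb⟩
      rcases Submodule.mem_sup.mp hb with ⟨b0, hb0, w, hw, rfl⟩
      rcases Submodule.mem_map.mp hw with ⟨c, hc, rfl⟩
      have hdb0 : d (p + 1) b0 = x.1 := by
        rw [← hdb]; simp [hd (p + 1) c]
      refine Submodule.mem_comap.mpr (Submodule.mem_map.mpr ⟨b0, ⟨hb0, ?_⟩, hdb0⟩)
      refine Submodule.mem_comap.mpr ?_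
      rw [hdb0]
      exact x.2.1.1
    · intro hx
      rcases Submodule.mem_map.mp (Submodule.mem_comap.mp hx) with ⟨b, hb, hdb⟩
      have : Submodule.inclusion h1 x ∈ NS := by
        refine Submodule.mem_comap.mpr (Submodule.mem_map.mpr ⟨b, Submodule.mem_sup_left hb.1, ?_⟩)
        exact hdb
      simpa [φ, LinearMap.mem_ker, Submodule.Quotient.mk_eq_zero] using this
  refine ⟨(Submodule.quotEquivOfEq NI (LinearMap.ker φ) hker.symm).trans
      (φ.quotKerEquivOfSurjective hsurj), ?_⟩
  intro x hx hx'
  have h2 : φ ⟨x, hx⟩ = Submodule.Quotient.mk ⟨x, hx'⟩ := rfl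
  simp only [LinearEquiv.trans_apply, Submodule.quotEquivOfEq_mk]
  exact h2
end

section
/- Suppose in the matrix reduction of the boundary matrices A_p (arising from a compatible basis of a filtration of graded subgroups), the pair (e^i_p, e^j_{p+1}) is produced by a pivot: i.e., the reduced matrix Ã_{p+1} has the pivot of column j at row i. Then column i of the reduced matrix Ã_p is zero. Consequently each basis element appears in at most one pair. -/
/-- `LowAt w i`: the lowest nonzero entry of the column `w` is at row `i`. -/
def LowAt {M : ℕ} {k : Type*} [Field k] (w : Fin M → k) (i : Fin M) : Prop :=
  w i ≠ 0 ∧ ∀ l : Fin M, i < l → w l = 0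

/-- `LowAtE v i`: the column `v` (rows indexed by the compatible-basis rows
`Fin m` followed by the auxiliary rows `Fin n`) has its lowest nonzero entry at
the compatible-basis row `i`; in particular all auxiliary entries vanish. -/
def LowAtE {m n : ℕ} {k : Type*} [Field k] (v : Fin m ⊕ Fin n → k) (i : Fin m) : Prop :=
  v (Sum.inl i) ≠ 0 ∧ (∀ l : Fin m, i < l → v (Sum.inl l) = 0) ∧
    ∀ r : Fin n, v (Sum.inr r) = 0

/-- A family of columns is *reduced* if distinct (nonzero) columns have distinct
pivots (lowest nonzero rows). -/
def ReducedCols {m M : ℕ} {k : Type*} [Field k] (cols : Fin m → Fin M → k) : Prop :=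
  ∀ (j j' : Fin m) (i : Fin M), LowAt (cols j) i → LowAt (cols j') i → j = j'

lemma exists_lowAt {M : ℕ} {k : Type*} [Field k] (u : Fin M → k) (hu : u ≠ 0) :
    ∃ i, LowAt u i := by
  classical
  have hne : (Finset.univ.filter (fun l => u l ≠ 0)).Nonempty := by
    by_contra h
    apply hu
    funext l
    simp only [Pi.zero_apply]
    by_contra hl
    exact h ⟨l, by simp [hl]⟩
  refine ⟨(Finset.univ.filter (fun l => u l ≠ 0)).max' hne, ?_, ?_⟩
  · have := Finset.max'_mem _ hne
    simpa using this
  · intro l hl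
    by_contra hl0
    have : l ≤ (Finset.univ.filter (fun l => u l ≠ 0)).max' hne :=
      Finset.le_max' _ _ (by simp [hl0])
    exact absurd hl (not_lt.mpr this)

lemma combo_lowAt {m M : ℕ} {k : Type*} [Field k] {cols : Fin m → Fin M → k}
    (hred : ReducedCols cols) {ι : Type*} [Fintype ι] (f : ι → Fin m)
    (hf : Function.Injective f) (c : ι → k) (v : Fin M → k)
    (hv : v = ∑ x, c x • cols (f x)) (hne : v ≠ 0) :
    ∃ x i0, LowAt v i0 ∧ LowAt (cols (f x)) i0 := by
  classical
  set s : Finset ι := Finset.univ.filter (fun x => c x • cols (f x) ≠ 0) with hs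
  have hv' : v = ∑ x ∈ s, c x • cols (f x) := by
    rw [hv, hs]
    exact (Finset.sum_filter_ne_zero _).symm
  have hsne : s.Nonempty := by
    rcases Finset.eq_empty_or_nonempty s with h | h
    · exact absurd (by rw [hv', h, Finset.sum_empty]) hne
    · exact h
  -- each x ∈ s : cols (f x) ≠ 0, c x ≠ 0
  have hcx : ∀ x ∈ s, c x ≠ 0 ∧ cols (f x) ≠ 0 := by
    intro x hx
    rw [hs, Finset.mem_filter] at hx
    constructor
    · intro h; exact hx.2 (by simp [h])
    · intro h; exact hx.2 (by simp [h])
  haveI : Nonempty (Fin M) := by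
    obtain ⟨x, hx⟩ := hsne
    by_contra h
    exact (hcx x hx).2 (funext fun l => absurd ⟨l⟩ h)
  -- pivot of each column
  choose! p hp using fun x (hx : x ∈ s) => exists_lowAt (cols (f x)) (hcx x hx).2
  obtain ⟨x0, hx0, hmax⟩ := s.exists_max_image p hsne
  refine ⟨x0, p x0, ?_, hp x0 hx0⟩
  have key : ∀ x ∈ s, x ≠ x0 → cols (f x) (p x0) = 0 := by
    intro x hx hxne
    have hle := hmax x hx
    rcases lt_or_eq_of_le hle with h | h
    · exact (hp x hx).2 _ h
    · exact absurd (hf (hred (f x) (f x0) (p x0) (h ▸ hp x hx) (hp x0 hx0))) hxne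
  constructor
  · have : v (p x0) = c x0 * cols (f x0) (p x0) := by
      rw [hv']
      rw [Finset.sum_apply]
      rw [Finset.sum_eq_single x0]
      · simp
      · intro x hx hxne
        simp [key x hx hxne]
      · intro h; exact absurd hx0 h
    rw [this]
    exact mul_ne_zero (hcx x0 hx0).1 (hp x0 hx0).1
  · intro l hl
    rw [hv', Finset.sum_apply]
    apply Finset.sum_eq_zero
    intro x hx
    have : cols (f x) l = 0 := (hp x hx).2 _ (lt_of_le_of_lt (hmax x hx) hl)
    simp [this]

/-- Suppose `∂∘∂ = 0`, `b1` is a basis of `C_p` whose `Sum.inl` part is the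
compatible basis `e_p` (ordered first) and whose `Sum.inr` part consists of the
auxiliary elements `ε_p`, and suppose the (already reduced) column of
`∂ ẽ^j_{p+1}` has its pivot at the row of `e^i_p` (i.e. `(e^i_p, e^j_{p+1})` is
a *pair*).  Then in any reduction of the degree-`p` boundary matrix — i.e. for
any left-to-right addition `U` of the family `e_p` making the columns of
`∂_p` (w.r.t. any ordered basis `b0` of `C_{p-1}`) reduced — the `i`-th column
is zero; in particular the `i`-th column has no pivot, so `e^i_p` does not also
occur as the lower element of a pair.  Moreover, if the degree-`p+1` columns are
reduced, then `e^i_p` is paired with no column other than `j`. -/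
theorem pair_clears_column
    {k : Type*} [Field k]
    {V2 V1 V0 : Type*}
    [AddCommGroup V2] [Module k V2] [AddCommGroup V1] [Module k V1]
    [AddCommGroup V0] [Module k V0]
    (d2 : V2 →ₗ[k] V1) (d1 : V1 →ₗ[k] V0)
    (hdd : ∀ x : V2, d1 (d2 x) = 0)
    {m1 n1 m2 : ℕ}
    (b1 : Module.Basis (Fin m1 ⊕ Fin n1) k V1)
    (e2t : Fin m2 → V2)
    (j : Fin m2) (i : Fin m1)
    (hpair : LowAtE (fun r => b1.repr (d2 (e2t j)) r) i) :
    (∀ (U : Matrix (Fin m1) (Fin m1) k),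
      (∀ a b : Fin m1, b < a → U a b = 0) → (∀ a : Fin m1, U a a = 1) →
      ∀ {M0 : ℕ} (b0 : Module.Basis (Fin M0) k V0),
        ReducedCols (fun j' i0 =>
          b0.repr (d1 (∑ l : Fin m1, U l j' • b1 (Sum.inl l))) i0) →
        (d1 (∑ l : Fin m1, U l i • b1 (Sum.inl l)) = 0 ∧
          ∀ i0 : Fin M0, ¬ LowAt (fun r =>
            b0.repr (d1 (∑ l : Fin m1, U l i • b1 (Sum.inl l))) r) i0)) ∧
    ((∀ (j₁ j₂ : Fin m2) (i' : Fin m1),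
        LowAtE (fun r => b1.repr (d2 (e2t j₁)) r) i' →
        LowAtE (fun r => b1.repr (d2 (e2t j₂)) r) i' → j₁ = j₂) →
      ∀ j' : Fin m2, LowAtE (fun r => b1.repr (d2 (e2t j')) r) i → j' = j) := by
  classical
  set c : Fin m1 → k := fun l => b1.repr (d2 (e2t j)) (Sum.inl l) with hc
  have hci : c i ≠ 0 := hpair.1
  constructor
  · intro U hU hUd M0 b0 hred
    set w : Fin m1 → (Fin M0 → k) := fun l i0 => b0.repr (d1 (b1 (Sum.inl l))) i0 with hw
    set t : Fin m1 → (Fin M0 → k) :=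
      fun j' i0 => b0.repr (d1 (∑ l : Fin m1, U l j' • b1 (Sum.inl l))) i0 with htdef
    have ht : ∀ j', t j' = ∑ l : Fin m1, U l j' • w l := by
      intro j'
      funext i0
      simp [htdef, hw, map_sum, map_smul, Finsupp.finset_sum_apply, Finsupp.smul_apply,
        Finset.sum_apply, smul_eq_mul]
    have htri : ∀ j' : Fin m1, t j' = w j' + ∑ l ∈ Finset.Iio j', U l j' • w l := by
      intro j'
      rw [ht j', ← Finset.sum_subset (Finset.subset_univ (Finset.Iic j'))
        (by intro l _ hl
            rw [hU l j' (by simpa using hl)]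
            simp)]
      rw [← Finset.Iio_insert, Finset.sum_insert (by simp), hUd, one_smul]
    set P : Submodule k (Fin M0 → k) :=
      Submodule.span k (Set.range fun x : {x : Fin m1 // x < i} => t x.1) with hP
    have hwP' : ∀ n : ℕ, ∀ l : Fin m1, l.val = n → l < i → w l ∈ P := by
      intro n
      induction n using Nat.strong_induction_on with
      | _ n IH =>
      intro l hln hl
      have hwl : w l = t l - ∑ l' ∈ Finset.Iio l, U l' l • w l' := by
        rw [htri l, add_sub_cancel_right]
      rw [hwl]
      refine Submodule.sub_mem _ (Submodule.subset_span ⟨⟨l, hl⟩, rfl⟩)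
        (Submodule.sum_mem _ ?_)
      intro l' hl'
      have hl'l : l' < l := Finset.mem_Iio.mp hl'
      exact Submodule.smul_mem _ _ (IH l'.val (hln ▸ hl'l) l' rfl (hl'l.trans hl))
    have hwP : ∀ l : Fin m1, l < i → w l ∈ P := fun l => hwP' l.val l rfl
    -- the chain relation
    have h2 : (0 : V0) = ∑ r : Fin m1 ⊕ Fin n1, b1.repr (d2 (e2t j)) r • d1 (b1 r) := by
      have h1 : d2 (e2t j) = ∑ r : Fin m1 ⊕ Fin n1, b1.repr (d2 (e2t j)) r • b1 r :=
        (b1.sum_repr _).symm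
      calc (0 : V0) = d1 (d2 (e2t j)) := (hdd _).symm
        _ = _ := by conv_lhs => rw [h1, map_sum]
                    simp only [map_smul]
    have hrel : (0 : Fin M0 → k) = ∑ l : Fin m1, c l • w l := by
      funext i0
      have h3 := congrArg (fun y => b0.repr y i0) h2
      simp only [map_zero, Finsupp.coe_zero, Pi.zero_apply, map_sum, map_smul,
        Finsupp.finset_sum_apply, Finsupp.smul_apply, smul_eq_mul] at h3
      rw [Fintype.sum_sum_type] at h3
      have haux : ∀ r : Fin n1, b1.repr (d2 (e2t j)) (Sum.inr r) = 0 := hpair.2.2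
      simp only [haux, zero_mul, Finset.sum_const_zero, add_zero] at h3
      simpa [hc, hw, Finset.sum_apply, smul_eq_mul] using h3
    have hrel2 : c i • w i = -∑ l ∈ Finset.Iio i, c l • w l := by
      have : (0 : Fin M0 → k) = c i • w i + ∑ l ∈ Finset.Iio i, c l • w l := by
        rw [hrel, ← Finset.sum_subset (Finset.subset_univ (Finset.Iic i))
          (by intro l _ hl
              rw [show c l = 0 from hpair.2.1 l (by simpa using hl)]
              simp)]
        rw [← Finset.Iio_insert, Finset.sum_insert (by simp)]
      exact eq_neg_of_add_eq_zero_left this.symm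
    have hwiP : w i ∈ P := by
      have hwi : w i = (c i)⁻¹ • (c i • w i) := by
        rw [smul_smul, inv_mul_cancel₀ hci, one_smul]
      rw [hwi, hrel2]
      refine Submodule.smul_mem _ _ (Submodule.neg_mem _ (Submodule.sum_mem _ ?_))
      intro l hl
      exact Submodule.smul_mem _ _ (hwP l (Finset.mem_Iio.mp hl))
    have htiP : t i ∈ P := by
      rw [htri i]
      refine Submodule.add_mem _ hwiP (Submodule.sum_mem _ ?_)
      intro l hl
      exact Submodule.smul_mem _ _ (hwP l (Finset.mem_Iio.mp hl))
    have hti0 : t i = 0 := by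
      by_contra hne
      rw [hP, Submodule.mem_span_range_iff_exists_fun] at htiP
      obtain ⟨co, hco⟩ := htiP
      obtain ⟨x, i0, hvlow, hxlow⟩ := combo_lowAt hred
        (fun x : {x : Fin m1 // x < i} => x.1)
        (fun a b hab => Subtype.ext hab) co (t i) hco.symm hne
      have heq : i = x.1 := hred i x.1 i0 hvlow hxlow
      exact absurd heq.symm (ne_of_lt x.2)
    have hX : d1 (∑ l : Fin m1, U l i • b1 (Sum.inl l)) = 0 := by
      have h4 : b0.repr (d1 (∑ l : Fin m1, U l i • b1 (Sum.inl l))) = 0 := by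
        ext i0
        exact congrFun hti0 i0
      exact (LinearEquiv.map_eq_zero_iff _).mp h4
    refine ⟨hX, ?_⟩
    intro i0 hlow
    have hne0 := hlow.1
    rw [hX] at hne0
    simp at hne0
  · intro h j' hj'
    exact h j' j i hj' hpair
end

section
/- Let D = (X, E, A) and D' = (X, E, A') be two weighted digraphs on the same finite vertex set and edge set with weight functions A, A' : E → ℝ, and let δ = max_{(x,y)∈E} |A(x,y) − A'(x,y)|. Then for every a ∈ ℝ there are inclusions of sublevel digraphs G^A_a ↪ G^{A'}_{a+δ} and of superlevel digraphs G^A_{ā} ↪ G^{A'}_{(a−δ)‾}, and symmetrically with A and A' exchanged; consequently the induced extended persistence modules V^D_p and V^{D'}_p (built from path homology of sublevel digraphs and relative path homology of superlevel digraphs) are δ-interleaved for every p. -/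
/-- The extended parameter poset `E = ℝ ∪ {∞} ∪ ℝᵒ`. -/
inductive EPt : Type where
  | real : ℝ → EPt
  | infty : EPt
  | coreal : ℝ → EPt

namespace EPt

/-- The order on `E`. -/
def le : EPt → EPt → Prop
  | real a, real b => a ≤ b
  | real _, infty => True
  | real _, coreal _ => True
  | infty, infty => True
  | infty, coreal _ => True
  | coreal a, coreal b => b ≤ a
  | _, _ => False

instance : PartialOrder EPt where
  le := le
  le_refl x := by cases x <;> simp [le]
  le_trans x y z hxy hyz := by
    cases x <;> cases y <;> cases z <;> simp_all [le] <;> linarith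
  le_antisymm x y hxy hyx := by
    cases x <;> cases y <;> simp_all [le] <;> linarith

end EPt

/-- An extended persistence module. -/
structure PersMod (k : Type) [Field k] where
  V : EPt → Type
  [acg : ∀ x, AddCommGroup (V x)]
  [mod : ∀ x, Module k (V x)]
  map : ∀ {x y : EPt}, x ≤ y → (V x →ₗ[k] V y)
  map_id : ∀ (x : EPt) (h : x ≤ x), map h = LinearMap.id
  map_comp : ∀ {x y z : EPt} (h1 : x ≤ y) (h2 : y ≤ z),
    map (le_trans h1 h2) = (map h2).comp (map h1)

attribute [instance] PersMod.acg PersMod.mod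

/-- `V` and `W` are `ε`-interleaved: there is a quadruple of families of maps
`φ_a, φ_b̄, ψ_a, ψ_b̄` shifted by `ε` satisfying the naturality conditions (i),
(i') and the triangle conditions (ii), (ii') of Definition 5.5. -/
def IsInterleaved (k : Type) [Field k] (V W : PersMod k) (ε : ℝ) (hε : 0 ≤ ε) :
    Prop :=
  ∃ (φr : ∀ a : ℝ, V.V (.real a) →ₗ[k] W.V (.real (a + ε)))
    (φc : ∀ b : ℝ, V.V (.coreal b) →ₗ[k] W.V (.coreal (b - ε)))
    (ψr : ∀ a : ℝ, W.V (.real a) →ₗ[k] V.V (.real (a + ε)))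
    (ψc : ∀ b : ℝ, W.V (.coreal b) →ₗ[k] V.V (.coreal (b - ε))),
    -- (i) naturality for φ
    (∀ (a a' : ℝ) (h : a ≤ a'),
      (W.map (show EPt.real (a + ε) ≤ EPt.real (a' + ε) from
        by change a + ε ≤ a' + ε; linarith)).comp (φr a)
        = (φr a').comp (V.map (show EPt.real a ≤ EPt.real a' from h))) ∧
    (∀ a b : ℝ,
      (W.map (show EPt.real (a + ε) ≤ EPt.coreal (b - ε) from trivial)).comp (φr a)
        = (φc b).comp (V.map (show EPt.real a ≤ EPt.coreal b from trivial))) ∧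
    (∀ (b b' : ℝ) (h : b' ≤ b),
      (W.map (show EPt.coreal (b - ε) ≤ EPt.coreal (b' - ε) from
        sub_le_sub_right h ε)).comp (φc b)
        = (φc b').comp (V.map (show EPt.coreal b ≤ EPt.coreal b' from h))) ∧
    -- (i') naturality for ψ
    (∀ (a a' : ℝ) (h : a ≤ a'),
      (V.map (show EPt.real (a + ε) ≤ EPt.real (a' + ε) from
        by change a + ε ≤ a' + ε; linarith)).comp (ψr a)
        = (ψr a').comp (W.map (show EPt.real a ≤ EPt.real a' from h))) ∧
    (∀ a b : ℝ,
      (V.map (show EPt.real (a + ε) ≤ EPt.coreal (b - ε) from trivial)).comp (ψr a)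
        = (ψc b).comp (W.map (show EPt.real a ≤ EPt.coreal b from trivial))) ∧
    (∀ (b b' : ℝ) (h : b' ≤ b),
      (V.map (show EPt.coreal (b - ε) ≤ EPt.coreal (b' - ε) from
        sub_le_sub_right h ε)).comp (ψc b)
        = (ψc b').comp (W.map (show EPt.coreal b ≤ EPt.coreal b' from h))) ∧
    -- (ii) triangle conditions
    (∀ a : ℝ, (ψr (a + ε)).comp (φr a)
        = V.map (show EPt.real a ≤ EPt.real (a + ε + ε) from by
            change a ≤ a + ε + ε; linarith)) ∧
    (∀ b : ℝ, (ψc (b - ε)).comp (φc b)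
        = V.map (show EPt.coreal b ≤ EPt.coreal (b - ε - ε) from by
            change b - ε - ε ≤ b; linarith)) ∧
    -- (ii')
    (∀ a : ℝ, (φr (a + ε)).comp (ψr a)
        = W.map (show EPt.real a ≤ EPt.real (a + ε + ε) from by
            change a ≤ a + ε + ε; linarith)) ∧
    (∀ b : ℝ, (φc (b - ε)).comp (ψc b)
        = W.map (show EPt.coreal b ≤ EPt.coreal (b - ε - ε) from by
            change b - ε - ε ≤ b; linarith))


open Submodule

/-! ## Path homology of digraphs -/

/-- `Λ_p(X)`: formal `k`-linear combinations of elementary `p`-paths on `X`. -/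
abbrev PathChains (k X : Type) [Field k] (p : ℕ) : Type :=
  (Fin (p + 1) → X) →₀ k

/-- The boundary operator `∂̄ : Λ_{p+1}(X) → Λ_p(X)`. -/
noncomputable def pathBoundary (k X : Type) [Field k] (p : ℕ) :
    PathChains k X (p + 1) →ₗ[k] PathChains k X p :=
  Finsupp.lift (PathChains k X p) k (Fin (p + 2) → X) fun f =>
    ∑ i : Fin (p + 2), ((-1 : k) ^ (i : ℕ)) • Finsupp.single (f ∘ i.succAbove) 1

/-- A path is irregular if two consecutive entries coincide. -/
def IsIrregular {X : Type} {p : ℕ} (f : Fin (p + 1) → X) : Prop :=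
  ∃ j : Fin p, f j.castSucc = f j.succ

/-- The subspace of `Λ_p(X)` spanned by irregular paths. -/
noncomputable def irregularSubspace (k X : Type) [Field k] (p : ℕ) :
    Submodule k (PathChains k X p) :=
  Submodule.span k
    {g | ∃ f : Fin (p + 1) → X, IsIrregular f ∧ g = Finsupp.single f 1}

/-- The regular path complex `R_p(X) = Λ_p(X)/I_p(X)`. -/
abbrev RegChains (k X : Type) [Field k] (p : ℕ) : Type :=
  PathChains k X p ⧸ irregularSubspace k X p

open Classical in
/-- The boundary operator induced on `R_*(X)`. -/
noncomputable def regBoundary (k X : Type) [Field k] (p : ℕ) :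
    RegChains k X (p + 1) →ₗ[k] RegChains k X p :=
  if h : Submodule.map (pathBoundary k X p) (irregularSubspace k X (p + 1))
      ≤ irregularSubspace k X p then
    Submodule.mapQ _ _ (pathBoundary k X p)
      (by rwa [← Submodule.map_le_iff_le_comap])
  else 0

/-- The boundary operator out of degree `p` (zero in degree `0`). -/
noncomputable def regBoundaryFrom (k X : Type) [Field k] :
    ∀ p : ℕ, RegChains k X p →ₗ[k] RegChains k X (p - 1)
  | 0 => 0
  | (q + 1) => regBoundary k X q

/-- A path in a digraph with edge set `Es` is *allowed* if consecutive
vertices are joined by edges. -/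
def IsAllowed {X : Type} (Es : Set (X × X)) {p : ℕ} (f : Fin (p + 1) → X) :
    Prop :=
  ∀ i : Fin p, (f i.castSucc, f i.succ) ∈ Es

/-- The graded subgroup `A_p(G) ⊆ R_p(X)` of allowed paths of the digraph with
edge set `Es`. -/
noncomputable def allowedSubgroup (k X : Type) [Field k] (Es : Set (X × X))
    (p : ℕ) : Submodule k (RegChains k X p) :=
  Submodule.map (irregularSubspace k X p).mkQ
    (Submodule.span k
      {g | ∃ f : Fin (p + 1) → X, IsAllowed Es f ∧ g = Finsupp.single f 1})

/-- The supremum complex `S_p(G) = A_p(G) + ∂ A_{p+1}(G)` of the allowed-path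
graded subgroup. -/
noncomputable def supCx (k X : Type) [Field k] (Es : Set (X × X)) (p : ℕ) :
    Submodule k (RegChains k X p) :=
  allowedSubgroup k X Es p ⊔
    Submodule.map (regBoundary k X p) (allowedSubgroup k X Es (p + 1))

/-! ## Subquotient homology and inclusion-induced maps -/

/-- `RelH Z B = Z / (B ∩ Z)` : homology presented as relative cycles `Z` modulo
boundaries `B`. -/
abbrev RelH {k M : Type*} [Field k] [AddCommGroup M] [Module k M]
    (Z B : Submodule k M) : Type _ :=
  ↥Z ⧸ Submodule.comap Z.subtype B

/-- The map between subquotient homologies induced by inclusions. -/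
noncomputable def RelHmap {k M : Type*} [Field k] [AddCommGroup M] [Module k M]
    {Z₁ Z₂ B₁ B₂ : Submodule k M} (hZ : Z₁ ≤ Z₂) (hB : B₁ ≤ B₂) :
    RelH Z₁ B₁ →ₗ[k] RelH Z₂ B₂ :=
  Submodule.mapQ _ _ (Submodule.inclusion hZ)
    (fun x hx => by
      simp only [Submodule.mem_comap, Submodule.subtype_apply] at hx ⊢
      rw [Submodule.coe_inclusion]
      exact hB hx)

theorem RelHmap_id {k M : Type*} [Field k] [AddCommGroup M] [Module k M]
    (Z B : Submodule k M) :
    RelHmap (le_refl Z) (le_refl B) = LinearMap.id := by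
  apply LinearMap.ext
  intro z
  obtain ⟨x, rfl⟩ := Submodule.Quotient.mk_surjective _ z
  have hx : Submodule.inclusion (le_refl Z) x = x :=
    Subtype.ext (Submodule.coe_inclusion _ x)
  simp [RelHmap, Submodule.mapQ_apply, hx]

theorem RelHmap_comp {k M : Type*} [Field k] [AddCommGroup M] [Module k M]
    {Z₁ Z₂ Z₃ B₁ B₂ B₃ : Submodule k M}
    (hZ₁ : Z₁ ≤ Z₂) (hB₁ : B₁ ≤ B₂) (hZ₂ : Z₂ ≤ Z₃) (hB₂ : B₂ ≤ B₃) :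
    (RelHmap hZ₂ hB₂).comp (RelHmap hZ₁ hB₁)
      = RelHmap (hZ₁.trans hZ₂) (hB₁.trans hB₂) := by
  apply LinearMap.ext
  intro z
  obtain ⟨x, rfl⟩ := Submodule.Quotient.mk_surjective _ z
  have hx : Submodule.inclusion hZ₂ (Submodule.inclusion hZ₁ x)
      = Submodule.inclusion (hZ₁.trans hZ₂) x := by
    apply Subtype.ext
    simp [Submodule.coe_inclusion]
  simp [RelHmap, Submodule.mapQ_apply, hx]

/-! ## The extended persistence module of a weighted digraph -/

/-- The edge set of the digraph associated to a point of `E`: the sublevel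
digraph `G_a` for `a ∈ ℝ`, and the full digraph `G` at `∞` and at co-reals. -/
def edgeSetAt {X : Type} (Es : Set (X × X)) (A : X × X → ℝ) : EPt → Set (X × X)
  | .real a => {e ∈ Es | A e ≤ a}
  | .infty => Es
  | .coreal _ => Es

/-- The "relative part" at a point of `E`: zero at reals and at `∞`, and the
supremum complex of the superlevel digraph `G_{ā}` at a co-real `ā`. -/
noncomputable def relPartAt (k X : Type) [Field k] (Es : Set (X × X))
    (A : X × X → ℝ) (n : ℕ) : EPt → Submodule k (RegChains k X n)
  | .real _ => ⊥
  | .infty => ⊥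
  | .coreal b => supCx k X {e ∈ Es | b ≤ A e} n

/-- Relative cycles of the extended persistence module `V^D_p` at `x ∈ E`. -/
noncomputable def cycOf (k X : Type) [Field k] (Es : Set (X × X))
    (A : X × X → ℝ) (p : ℕ) (x : EPt) : Submodule k (RegChains k X p) :=
  supCx k X (edgeSetAt Es A x) p ⊓
    Submodule.comap (regBoundaryFrom k X p) (relPartAt k X Es A (p - 1) x)

/-- Relative boundaries of the extended persistence module `V^D_p` at `x ∈ E`. -/
noncomputable def bdryOf (k X : Type) [Field k] (Es : Set (X × X))
    (A : X × X → ℝ) (p : ℕ) (x : EPt) : Submodule k (RegChains k X p) :=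
  Submodule.map (regBoundary k X p) (supCx k X (edgeSetAt Es A x) (p + 1)) ⊔
    relPartAt k X Es A p x

theorem allowedSubgroup_mono (k X : Type) [Field k] {E₁ E₂ : Set (X × X)}
    (h : E₁ ⊆ E₂) (p : ℕ) :
    allowedSubgroup k X E₁ p ≤ allowedSubgroup k X E₂ p := by
  apply Submodule.map_mono
  apply Submodule.span_mono
  rintro g ⟨f, hf, rfl⟩
  exact ⟨f, fun i => h (hf i), rfl⟩

theorem supCx_mono (k X : Type) [Field k] {E₁ E₂ : Set (X × X)}
    (h : E₁ ⊆ E₂) (p : ℕ) : supCx k X E₁ p ≤ supCx k X E₂ p :=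
  sup_le_sup (allowedSubgroup_mono k X h p)
    (Submodule.map_mono (allowedSubgroup_mono k X h (p + 1)))

theorem edgeSetAt_mono {X : Type} (Es : Set (X × X)) (A : X × X → ℝ)
    {x y : EPt} (h : x ≤ y) : edgeSetAt Es A x ⊆ edgeSetAt Es A y := by
  cases x with
  | real a =>
    cases y with
    | real b => exact fun e he => ⟨he.1, he.2.trans (h : a ≤ b)⟩
    | infty => exact fun e he => he.1
    | coreal b => exact fun e he => he.1
  | infty =>
    cases y with
    | real b => exact (h : False).elim
    | infty => exact subset_rfl
    | coreal b => exact subset_rfl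
  | coreal a =>
    cases y with
    | real b => exact (h : False).elim
    | infty => exact (h : False).elim
    | coreal b => exact subset_rfl

theorem relPartAt_mono (k X : Type) [Field k] (Es : Set (X × X))
    (A : X × X → ℝ) (n : ℕ) {x y : EPt} (h : x ≤ y) :
    relPartAt k X Es A n x ≤ relPartAt k X Es A n y := by
  cases x with
  | real a =>
    cases y with
    | real b => exact le_refl _
    | infty => exact bot_le
    | coreal b => exact bot_le
  | infty =>
    cases y with
    | real b => exact (h : False).elim
    | infty => exact le_refl _
    | coreal b => exact bot_le
  | coreal a =>
    cases y with
    | real b => exact (h : False).elim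
    | infty => exact (h : False).elim
    | coreal b =>
      exact supCx_mono k X
        (show {e ∈ Es | a ≤ A e} ⊆ {e ∈ Es | b ≤ A e} from
          fun e he => ⟨he.1, le_trans (h : b ≤ a) he.2⟩) n

theorem cycOf_mono (k X : Type) [Field k] (Es : Set (X × X)) (A : X × X → ℝ)
    (p : ℕ) {x y : EPt} (h : x ≤ y) :
    cycOf k X Es A p x ≤ cycOf k X Es A p y :=
  inf_le_inf (supCx_mono k X (edgeSetAt_mono Es A h) p)
    (Submodule.comap_mono (relPartAt_mono k X Es A (p - 1) h))

theorem bdryOf_mono (k X : Type) [Field k] (Es : Set (X × X)) (A : X × X → ℝ)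
    (p : ℕ) {x y : EPt} (h : x ≤ y) :
    bdryOf k X Es A p x ≤ bdryOf k X Es A p y :=
  sup_le_sup
    (Submodule.map_mono (supCx_mono k X (edgeSetAt_mono Es A h) (p + 1)))
    (relPartAt_mono k X Es A p h)

/-- The extended persistence module `V^D_p` of the weighted digraph
`D = (X, Es, A)` in degree `p`: path homology `H_p(G_a)` of sublevel digraphs
at reals, `H_p(G)` at `∞`, and relative path homology `H_p(G, G_{ā})` at
co-reals, with all maps induced by inclusion. -/
noncomputable def pathPersMod (k X : Type) [Field k] (Es : Set (X × X))
    (A : X × X → ℝ) (p : ℕ) : PersMod k where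
  V x := RelH (cycOf k X Es A p x) (bdryOf k X Es A p x)
  map {x y} h := RelHmap (cycOf_mono k X Es A p h) (bdryOf_mono k X Es A p h)
  map_id x h := RelHmap_id _ _
  map_comp h1 h2 := (RelHmap_comp _ _ _ _).symm

theorem cycOf_real_le (k X : Type) [Field k] (Es : Set (X × X))
    (A A' : X × X → ℝ) (p : ℕ) {a b : ℝ}
    (h : {e ∈ Es | A e ≤ a} ⊆ {e ∈ Es | A' e ≤ b}) :
    cycOf k X Es A p (.real a) ≤ cycOf k X Es A' p (.real b) :=
  inf_le_inf (supCx_mono k X h p) le_rfl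

theorem bdryOf_real_le (k X : Type) [Field k] (Es : Set (X × X))
    (A A' : X × X → ℝ) (p : ℕ) {a b : ℝ}
    (h : {e ∈ Es | A e ≤ a} ⊆ {e ∈ Es | A' e ≤ b}) :
    bdryOf k X Es A p (.real a) ≤ bdryOf k X Es A' p (.real b) :=
  sup_le_sup (Submodule.map_mono (supCx_mono k X h (p + 1))) le_rfl

theorem cycOf_coreal_le (k X : Type) [Field k] (Es : Set (X × X))
    (A A' : X × X → ℝ) (p : ℕ) {a b : ℝ}
    (h : {e ∈ Es | a ≤ A e} ⊆ {e ∈ Es | b ≤ A' e}) :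
    cycOf k X Es A p (.coreal a) ≤ cycOf k X Es A' p (.coreal b) :=
  inf_le_inf le_rfl (Submodule.comap_mono (supCx_mono k X h (p - 1)))

theorem bdryOf_coreal_le (k X : Type) [Field k] (Es : Set (X × X))
    (A A' : X × X → ℝ) (p : ℕ) {a b : ℝ}
    (h : {e ∈ Es | a ≤ A e} ⊆ {e ∈ Es | b ≤ A' e}) :
    bdryOf k X Es A p (.coreal a) ≤ bdryOf k X Es A' p (.coreal b) :=
  sup_le_sup le_rfl (supCx_mono k X h p)

theorem RelHmap_tri {k M : Type*} [Field k] [AddCommGroup M] [Module k M]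
    {Z₁ Z₂ Z₃ B₁ B₂ B₃ : Submodule k M}
    (hZ₁ : Z₁ ≤ Z₂) (hB₁ : B₁ ≤ B₂) (hZ₂ : Z₂ ≤ Z₃) (hB₂ : B₂ ≤ B₃)
    (hZ : Z₁ ≤ Z₃) (hB : B₁ ≤ B₃) :
    (RelHmap hZ₂ hB₂).comp (RelHmap hZ₁ hB₁) = RelHmap hZ hB :=
  RelHmap_comp hZ₁ hB₁ hZ₂ hB₂

theorem RelHmap_nat {k M : Type*} [Field k] [AddCommGroup M] [Module k M]
    {Z₁ Z₂ Z₃ Z₂' B₁ B₂ B₃ B₂' : Submodule k M}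
    (hZ₁ : Z₁ ≤ Z₂) (hB₁ : B₁ ≤ B₂) (hZ₂ : Z₂ ≤ Z₃) (hB₂ : B₂ ≤ B₃)
    (hZ₁' : Z₁ ≤ Z₂') (hB₁' : B₁ ≤ B₂') (hZ₂' : Z₂' ≤ Z₃) (hB₂' : B₂' ≤ B₃) :
    (RelHmap hZ₂ hB₂).comp (RelHmap hZ₁ hB₁)
      = (RelHmap hZ₂' hB₂').comp (RelHmap hZ₁' hB₁') :=
  (RelHmap_comp hZ₁ hB₁ hZ₂ hB₂).trans (RelHmap_comp hZ₁' hB₁' hZ₂' hB₂').symm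

/-- **Stability for extended persistent path homology** (Theorem 5.13 of the
paper).  If `D = (X, Es, A)` and `D' = (X, Es, A')` are weighted digraphs on
the same vertex and edge sets with `max_{e ∈ Es} |A e - A' e| ≤ δ`, then the
sublevel digraphs of `A` include into the `δ`-shifted sublevel digraphs of `A'`
(and symmetrically, and likewise for superlevel digraphs), and consequently
the extended persistence modules `V^D_p` and `V^{D'}_p` are `δ`-interleaved
for every `p`. -/
theorem path_homology_stability (k X : Type) [Field k] [Fintype X]
    (Es : Set (X × X)) (hloop : ∀ x : X, (x, x) ∉ Es)
    (A A' : X × X → ℝ) (δ : ℝ) (hδ0 : 0 ≤ δ)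
    (hδ : ∀ e ∈ Es, |A e - A' e| ≤ δ) :
    (∀ a : ℝ, {e ∈ Es | A e ≤ a} ⊆ {e ∈ Es | A' e ≤ a + δ}) ∧
    (∀ a : ℝ, {e ∈ Es | a ≤ A e} ⊆ {e ∈ Es | a - δ ≤ A' e}) ∧
    (∀ a : ℝ, {e ∈ Es | A' e ≤ a} ⊆ {e ∈ Es | A e ≤ a + δ}) ∧
    (∀ a : ℝ, {e ∈ Es | a ≤ A' e} ⊆ {e ∈ Es | a - δ ≤ A e}) ∧
    ∀ p : ℕ,
      IsInterleaved k (pathPersMod k X Es A p) (pathPersMod k X Es A' p) δ hδ0 := by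
  have h1 : ∀ a : ℝ, {e ∈ Es | A e ≤ a} ⊆ {e ∈ Es | A' e ≤ a + δ} := by
    intro a e he
    have := abs_le.mp (hδ e he.1)
    exact ⟨he.1, by linarith [he.2, this.1]⟩
  have h2 : ∀ a : ℝ, {e ∈ Es | a ≤ A e} ⊆ {e ∈ Es | a - δ ≤ A' e} := by
    intro a e he
    have := abs_le.mp (hδ e he.1)
    exact ⟨he.1, by linarith [he.2, this.2]⟩
  have h3 : ∀ a : ℝ, {e ∈ Es | A' e ≤ a} ⊆ {e ∈ Es | A e ≤ a + δ} := by
    intro a e he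
    have := abs_le.mp (hδ e he.1)
    exact ⟨he.1, by linarith [he.2, this.2]⟩
  have h4 : ∀ a : ℝ, {e ∈ Es | a ≤ A' e} ⊆ {e ∈ Es | a - δ ≤ A e} := by
    intro a e he
    have := abs_le.mp (hδ e he.1)
    exact ⟨he.1, by linarith [he.2, this.1]⟩
  refine ⟨h1, h2, h3, h4, fun p => ?_⟩
  refine ⟨fun a => RelHmap (cycOf_real_le k X Es A A' p (h1 a))
      (bdryOf_real_le k X Es A A' p (h1 a)),
    fun b => RelHmap (cycOf_coreal_le k X Es A A' p (h2 b))
      (bdryOf_coreal_le k X Es A A' p (h2 b)),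
    fun a => RelHmap (cycOf_real_le k X Es A' A p (h3 a))
      (bdryOf_real_le k X Es A' A p (h3 a)),
    fun b => RelHmap (cycOf_coreal_le k X Es A' A p (h4 b))
      (bdryOf_coreal_le k X Es A' A p (h4 b)),
    ?_, ?_, ?_, ?_, ?_, ?_, ?_, ?_, ?_, ?_⟩ <;>
  · intros
    simp only [pathPersMod]
    first
      | exact RelHmap_nat _ _ _ _ _ _ _ _
      | exact RelHmap_tri _ _ _ _ _ _
end
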